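/- With a Cantor basis (β_i) and vanishing polynomials s_i, for every j and i ≤ j: s_i(β_j) = β_{j−i} (interpreting β indices via repeated application of x ↦ x²+x), i.e., applying s₁ to β_j yields β_{j−1}; consequently s_i(φ_β(k)) = φ_β(k ≫ i), where φ_β(k) = Σ b_j β_j for binary digits b_j of k (k ≫ i is the right bit-shift). -/

import Mathlib

/-- With a Cantor basis `(β_i)` (`β₀ = 1`, `β_i² + β_i = β_{i−1}`), `s₁(x) = x² + x`
and `s_i` the `i`-fold iterate of `s₁`, and `φ_β(k) = Σ b_j β_j` for the binary
digits `b_j` of `k`: we have `s₁(β₀) = 0`, `s₁(β_j) = β_{j−1}` for `j ≥ 1`, and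
`s_i(φ_β(k)) = φ_β(k ≫ i)` where `≫` is the right bit-shift. -/
theorem stmt_7 (F : Type*) [Field F] [CharP F 2] (β : ℕ → F)
    (hβ0 : β 0 = 1) (hβ : ∀ i, β (i + 1) ^ 2 + β (i + 1) = β i)
    (s1 : F → F) (hs1 : ∀ x, s1 x = x ^ 2 + x)
    (φ : ℕ → F)
    (hφ : ∀ k, φ k = ∑ j ∈ Finset.range k, if k.testBit j then β j else 0) :
    s1 (β 0) = 0 ∧ (∀ j, s1 (β (j + 1)) = β j) ∧
    ∀ k i, s1^[i] (φ k) = φ (k >>> i) := by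
  have hs10 : s1 0 = 0 := by rw [hs1]; ring
  have hsb0 : s1 (β 0) = 0 := by
    rw [hs1, hβ0]
    have : (2 : F) = 0 := by exact_mod_cast CharP.cast_eq_zero F 2
    linear_combination this
  have hsb : ∀ j, s1 (β (j + 1)) = β j := fun j => by rw [hs1]; exact hβ j
  have hadd : ∀ x y, s1 (x + y) = s1 x + s1 y := by
    intro x y
    rw [hs1, hs1, hs1]
    have h2 : (2:F) = 0 := by exact_mod_cast CharP.cast_eq_zero F 2
    ring_nf
    linear_combination (2*x*y)*h2 - x*y*h2
  have hφ' : ∀ k n, k ≤ n →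
      φ k = ∑ j ∈ Finset.range n, if k.testBit j then β j else 0 := by
    intro k n hkn
    rw [hφ]
    apply Finset.sum_subset (Finset.range_subset_range.mpr hkn)
    intro j hj hjk
    simp only [Finset.mem_range, not_lt] at hjk
    rw [Nat.testBit_lt_two_pow (lt_of_le_of_lt hjk (Nat.lt_two_pow_self (n := j)))]
    simp
  have hsum : ∀ (n : ℕ) (f : ℕ → F),
      s1 (∑ j ∈ Finset.range n, f j) = ∑ j ∈ Finset.range n, s1 (f j) := by
    intro n f
    induction n with
    | zero => simpa using hs10
    | succ n ih => rw [Finset.sum_range_succ, hadd, ih, Finset.sum_range_succ]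
  have key : ∀ k, s1 (φ k) = φ (k >>> 1) := by
    intro k
    rw [hφ' k (k + 1) (Nat.le_succ k), hsum, Finset.sum_range_succ']
    have h0 : s1 (if k.testBit 0 then β 0 else 0) = 0 := by
      split <;> [exact hsb0; exact hs10]
    rw [h0, add_zero]
    rw [hφ' (k >>> 1) k (by rw [Nat.shiftRight_eq_div_pow]; exact Nat.div_le_self _ _)]
    apply Finset.sum_congr rfl
    intro j _
    rw [Nat.testBit_shiftRight]
    split
    · rw [show 1 + j = j + 1 by ring] at *
      split
      · exact hsb j
      · simp_all
    · rw [show 1 + j = j + 1 by ring] at *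
      simp_all [hs10]
  refine ⟨hsb0, hsb, fun k i => ?_⟩
  induction i generalizing k with
  | zero => simp
  | succ i ih =>
    rw [Function.iterate_succ_apply, key, ih, ← Nat.shiftRight_add, Nat.add_comm]
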